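/- For pseudodifferential operators A(∂), B(∂) over a differential algebra A, one has res_z A(z)B*(−z+λ) = res_z A(z+λ+∂)B(z), where B* is the formal adjoint, λ a formal variable, and ∂ acts on the coefficients of B. -/

import Mathlib

/-!
STATEMENT 9: For pseudodifferential operators `a(∂), b(∂)` over a differential
algebra `A`, one has `res_z a(z)b*(−z+λ) = res_z a(z+λ+∂)b(z)`, where `b*` is the
formal adjoint, `λ` a formal variable and `∂` acts on the coefficients of `b`.

Encoding: `a b : ℤ → A` are the coefficient functions (support bounded above).
The symbol of the adjoint `b*(∂) = ∑_n (−∂)ⁿ ∘ b n` has coefficients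
`adjointCoeff d b q = ∑ᶠ j, ((−1)^{q+j} C(q+j,j)) • d^[j] (b (q+j))`.
Expanding `b*(−z+λ)` in non-negative powers of `λ` and `a(z+λ+∂)` in non-negative
powers of `λ` and `∂`, and taking `res_z`, the coefficient of `λ^i` of the two
sides reads as in the statement below.
-/

/-- `(−1)^n` for `n : ℤ`. -/
def signPow (n : ℤ) : ℤ := (((-1 : ℤˣ) ^ n : ℤˣ) : ℤ)

/-- Coefficient of `∂^q` in the formal adjoint `∑_n (−∂)ⁿ ∘ b n`. -/
noncomputable def adjointCoeff {A : Type*} [CommRing A] (d : A → A)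
    (b : ℤ → A) (q : ℤ) : A :=
  ∑ᶠ j : ℕ, (signPow (q + (j : ℤ)) * Ring.choose (q + (j : ℤ)) j) • d^[j] (b (q + j))

lemma signPow_add (x y : ℤ) : signPow (x + y) = signPow x * signPow y := by
  simp [signPow, zpow_add]

lemma signPow_natCast (n : ℕ) : signPow (n : ℤ) = (-1 : ℤ) ^ n := by
  simp [signPow, zpow_natCast]

lemma signPow_mul_self (x : ℤ) : signPow x * signPow x = 1 := by
  rw [signPow, ← Units.val_mul, ← sq, Int.units_sq, Units.val_one]

lemma signPow_two_mul (t : ℤ) : signPow (2 * t) = 1 := by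
  rw [two_mul, signPow_add, signPow_mul_self]

/-- Reflection formula for the generalized binomial coefficient over `ℤ`. -/
lemma ring_choose_reflect (r : ℤ) (n : ℕ) :
    Ring.choose ((n : ℤ) - r - 1) n = (-1 : ℤ) ^ n * Ring.choose r n := by
  apply nsmul_right_injective (M := ℤ) n.factorial_ne_zero
  simp only
  rw [← Ring.descPochhammer_eq_factorial_smul_choose]
  have h1 : (descPochhammer ℤ n).smeval ((n : ℤ) - r - 1) =
      (ascPochhammer ℕ n).smeval (-r) := by
    rw [Polynomial.descPochhammer_smeval_eq_ascPochhammer]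
    ring_nf
  rw [h1, Polynomial.ascPochhammer_smeval_neg_eq_descPochhammer,
    Ring.descPochhammer_eq_factorial_smul_choose]
  rw [nsmul_eq_mul, nsmul_eq_mul]
  simp only [Units.smul_def, Int.negOnePow_def, zpow_natCast, Units.val_pow_eq_pow_val,
    Units.val_neg, Units.val_one, smul_eq_mul]
  ring

/-- The key coefficient identity. -/
lemma coeff_identity (m : ℤ) (i j : ℕ) :
    (signPow (((i : ℤ) - 1 - m) - (i : ℤ)) * Ring.choose ((i : ℤ) - 1 - m) i) *
      (signPow (((i : ℤ) - 1 - m) + (j : ℤ)) *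
        Ring.choose (((i : ℤ) - 1 - m) + (j : ℤ)) j) =
    Ring.choose m (i + j) * (Nat.choose (i + j) j : ℤ) := by
  have e1 : Ring.choose ((i : ℤ) - 1 - m) i = (-1 : ℤ) ^ i * Ring.choose m i := by
    rw [show ((i : ℤ) - 1 - m) = (i : ℤ) - m - 1 by ring, ring_choose_reflect]
  have e2 : Ring.choose (((i : ℤ) - 1 - m) + (j : ℤ)) j =
      (-1 : ℤ) ^ j * Ring.choose (m - (i : ℤ)) j := by
    rw [show ((i : ℤ) - 1 - m + (j : ℤ)) = (j : ℤ) - (m - (i : ℤ)) - 1 by ring,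
      ring_choose_reflect]
  have e3 : Ring.choose m i * Ring.choose (m - (i : ℤ)) j =
      Ring.choose m (i + j) * (Nat.choose (i + j) j : ℤ) := by
    have h := Ring.choose_smul_choose (R := ℤ) m (Nat.le_add_right i j)
    rw [Nat.add_sub_cancel_left, nsmul_eq_mul] at h
    rw [← h, Nat.choose_symm_add]
    ring
  have e4 : signPow (((i : ℤ) - 1 - m) - (i : ℤ)) * signPow (((i : ℤ) - 1 - m) + (j : ℤ))
      * ((-1 : ℤ) ^ i * (-1 : ℤ) ^ j) = 1 := by
    rw [← signPow_natCast, ← signPow_natCast, ← signPow_add, ← signPow_add, ← signPow_add,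
      show ((i : ℤ) - 1 - m - (i : ℤ) + ((i : ℤ) - 1 - m + (j : ℤ)) + ((i : ℤ) + (j : ℤ)))
        = 2 * ((i : ℤ) + (j : ℤ) - m - 1) by ring, signPow_two_mul]
  calc (signPow (((i : ℤ) - 1 - m) - (i : ℤ)) * Ring.choose ((i : ℤ) - 1 - m) i) *
      (signPow (((i : ℤ) - 1 - m) + (j : ℤ)) *
        Ring.choose (((i : ℤ) - 1 - m) + (j : ℤ)) j)
      = (signPow (((i : ℤ) - 1 - m) - (i : ℤ)) * signPow (((i : ℤ) - 1 - m) + (j : ℤ))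
          * ((-1 : ℤ) ^ i * (-1 : ℤ) ^ j)) * (Ring.choose m i * Ring.choose (m - (i : ℤ)) j) := by
        rw [e1, e2]; ring
    _ = Ring.choose m (i + j) * (Nat.choose (i + j) j : ℤ) := by rw [e4, e3, one_mul]

theorem res_adjoint_shift_identity
    (F : Type*) [Field F] [CharZero F]
    (A : Type*) [CommRing A] [Algebra F A] (d : Derivation F A A)
    (a b : ℤ → A)
    (ha : ∃ N : ℤ, ∀ n : ℤ, N < n → a n = 0)
    (hb : ∃ N : ℤ, ∀ n : ℤ, N < n → b n = 0)
    (i : ℕ) :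
    (∑ᶠ q : ℤ, (signPow (q - (i : ℤ)) * Ring.choose q i) •
        (a ((i : ℤ) - q - 1) * adjointCoeff (⇑d) b q)) =
      ∑ᶠ m : ℤ, ∑ᶠ k : ℕ,
        (Ring.choose m (i + k) * (Nat.choose (i + k) k : ℤ)) •
          (a m * (⇑d)^[k] (b ((i : ℤ) + (k : ℤ) - m - 1))) := by
  classical
  obtain ⟨Nb, hNb⟩ := hb
  -- finiteness of the inner supports
  have hfin : ∀ q : ℤ, (Function.support fun j : ℕ =>
      (signPow (q + (j : ℤ)) * Ring.choose (q + (j : ℤ)) j) • (⇑d)^[j] (b (q + j))).Finite := by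
    intro q
    apply Set.Finite.subset (Set.finite_Iic (Nb - q).toNat)
    intro j hj
    simp only [Function.mem_support] at hj
    simp only [Set.mem_Iic]
    by_contra hle
    push_neg at hle
    have h1 : Nb < q + (j : ℤ) := by
      have h2 : ((Nb - q).toNat : ℤ) < (j : ℤ) := by exact_mod_cast hle
      have h3 : Nb - q ≤ ((Nb - q).toNat : ℤ) := Int.self_le_toNat _
      omega
    have hb0 : b (q + (j : ℤ)) = 0 := hNb _ h1
    rw [hb0] at hj
    exact hj (by rw [Function.iterate_fixed d.map_zero j, smul_zero])
  -- distribute each outer summand into an inner finsum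
  have step1 : ∀ q : ℤ, (signPow (q - (i : ℤ)) * Ring.choose q i) •
      (a ((i : ℤ) - q - 1) * adjointCoeff (⇑d) b q)
      = ∑ᶠ j : ℕ, ((signPow (q - (i : ℤ)) * Ring.choose q i) *
          (signPow (q + (j : ℤ)) * Ring.choose (q + (j : ℤ)) j)) •
            (a ((i : ℤ) - q - 1) * (⇑d)^[j] (b (q + j))) := by
    intro q
    rw [adjointCoeff, mul_finsum' _ _ (hfin q)]
    have hfin2 : (Function.support fun j : ℕ => a ((i : ℤ) - q - 1) *
        ((signPow (q + (j : ℤ)) * Ring.choose (q + (j : ℤ)) j) • (⇑d)^[j] (b (q + j)))).Finite := by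
      apply Set.Finite.subset (hfin q)
      intro j hj
      simp only [Function.mem_support] at hj ⊢
      exact fun h => hj (by rw [h, mul_zero])
    rw [smul_finsum' _ hfin2]
    refine finsum_congr fun j => ?_
    rw [mul_smul_comm, smul_smul]
  rw [finsum_congr step1, ← finsum_comp_equiv (Equiv.subLeft ((i : ℤ) - 1))]
  refine finsum_congr fun m => ?_
  refine finsum_congr fun j => ?_
  simp only [Equiv.subLeft_apply]
  rw [show (i : ℤ) - ((i : ℤ) - 1 - m) - 1 = m by ring,
    ← coeff_identity m i j,
    show (i : ℤ) + (j : ℤ) - m - 1 = (i : ℤ) - 1 - m + (j : ℤ) by ring]
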